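/- Let A be a tower of R-modules (inverse system over ℕ). If A satisfies the Mittag-Leffler condition — for each p there exists k such that the image of A_{p+r} → A_p equals the image of A_{p+k} → A_p for all r ≥ k — then lim¹ A = 0. -/
import Mathlib


/-- The composite transition map `A (p + r) →ₗ[R] A p` of a tower. -/
def towerTransition {R : Type*} [Ring R] {A : ℕ → Type*} [∀ n, AddCommGroup (A n)]
    [∀ n, Module R (A n)] (a : ∀ n, A (n + 1) →ₗ[R] A n) :
    ∀ (p r : ℕ), A (p + r) →ₗ[R] A p
  | _, 0 => LinearMap.id
  | p, r + 1 => (towerTransition a p r).comp (a (p + r))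

section AuxML

variable {R : Type*} [Ring R] {A : ℕ → Type*} [∀ n, AddCommGroup (A n)]
    [∀ n, Module R (A n)] (a : ∀ n, A (n + 1) →ₗ[R] A n)

lemma myCast_apply {A : ℕ → Type*} {i j : ℕ} (h : i = j) (y : ∀ n, A n) :
    _root_.cast (congrArg A h) (y i) = y j := by subst h; rfl

lemma myCast_a {n m : ℕ} (h : n = m) (x : A (n + 1)) :
    _root_.cast (congrArg A h) (a n x)
      = a m (_root_.cast (congrArg A (by rw [h])) x) := by
  subst h; simp

lemma tt_key : ∀ (r p : ℕ) (x : A (p + 1 + r)),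
    a p (towerTransition a (p + 1) r x)
      = towerTransition a p (r + 1)
          (_root_.cast (congrArg A (Nat.add_right_comm p 1 r)) x) := by
  intro r
  induction r with
  | zero =>
    intro p x
    show a p x = towerTransition a p 1 (_root_.cast _ x)
    rw [cast_eq]
    rfl
  | succ r ih =>
    intro p x
    have h1 : towerTransition a (p + 1) (r + 1) x
        = towerTransition a (p + 1) r (a (p + 1 + r) x) := rfl
    rw [h1, ih p (a (p + 1 + r) x)]
    have h2 : towerTransition a p (r + 1 + 1)
          (_root_.cast (congrArg A (Nat.add_right_comm p 1 (r + 1))) x)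
        = towerTransition a p (r + 1)
          (a (p + r + 1) (_root_.cast (congrArg A (Nat.add_right_comm p 1 (r + 1))) x)) := rfl
    rw [h2, myCast_a a (Nat.add_right_comm p 1 r)]

end AuxML

/-- Mittag-Leffler condition implies `lim¹ = 0` for a tower of `R`-modules:
if for each `p` the images of `A_{p+r} → A_p` stabilize, then the map
`d : ∏ A_n → ∏ A_n`, `(x_n) ↦ (x_n − a_n (x_{n+1}))`, is surjective. -/
theorem stmt11 {R : Type*} [Ring R] (A : ℕ → Type*) [∀ n, AddCommGroup (A n)]
    [∀ n, Module R (A n)] (a : ∀ n, A (n + 1) →ₗ[R] A n)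
    (hML : ∀ p, ∃ k, ∀ r, k ≤ r →
      LinearMap.range (towerTransition a p r) = LinearMap.range (towerTransition a p k)) :
    LinearMap.range (LinearMap.pi (fun n =>
      (LinearMap.proj n : (∀ m, A m) →ₗ[R] A n) - (a n).comp (LinearMap.proj (n + 1)))) = ⊤ := by
  rw [LinearMap.range_eq_top]
  intro y
  choose k hk using hML
  set B : ∀ p, Submodule R (A p) :=
    fun p => LinearMap.range (towerTransition a p (k p)) with hB
  -- the stable images form a surjective subtower
  have Bsurj : ∀ p, ∀ b ∈ B p, ∃ c ∈ B (p + 1), a p c = b := by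
    intro p b hb
    set r := max (k p) (k (p + 1)) with hr
    have h1 : LinearMap.range (towerTransition a p (r + 1)) = B p :=
      hk p (r + 1) (le_trans (le_max_left _ _) (Nat.le_succ r))
    rw [← h1] at hb
    obtain ⟨x, hx⟩ := hb
    set x' : A (p + 1 + r) :=
      _root_.cast (congrArg A (Nat.add_right_comm p 1 r).symm) x with hx'
    refine ⟨towerTransition a (p + 1) r x', ?_, ?_⟩
    · show towerTransition a (p + 1) r x'
          ∈ LinearMap.range (towerTransition a (p + 1) (k (p + 1)))
      rw [← hk (p + 1) r (le_max_right _ _)]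
      exact LinearMap.mem_range_self _ _
    · rw [tt_key, hx', cast_cast, cast_eq, hx]
  -- the cut-off indices
  set t : ℕ → ℕ := fun n => Nat.rec (k 0) (fun n tn => max (k (n + 1)) tn) n with ht
  have htk : ∀ n, k n ≤ t n := by
    intro n; cases n with
    | zero => simp [ht]
    | succ n => exact le_max_left _ _
  have htmono : ∀ n, t n ≤ t (n + 1) := fun n => le_max_right _ _
  -- partial sums
  set S : ∀ n, ℕ → A n :=
    fun n m => ∑ s ∈ Finset.range m, towerTransition a n s (y (n + s)) with hS
  have hterm : ∀ n s, k n ≤ s → towerTransition a n s (y (n + s)) ∈ B n := by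
    intro n s hs
    show towerTransition a n s (y (n + s))
        ∈ LinearMap.range (towerTransition a n (k n))
    rw [← hk n s hs]
    exact LinearMap.mem_range_self _ _
  have hSrec : ∀ n m, a n (S (n + 1) m) = S n (m + 1) - y n := by
    intro n m
    have h1 : a n (S (n + 1) m)
        = ∑ s ∈ Finset.range m, towerTransition a n (s + 1) (y (n + s + 1)) := by
      rw [hS, map_sum]
      refine Finset.sum_congr rfl fun s _ => ?_
      rw [tt_key a s n (y (n + 1 + s)), myCast_apply (Nat.add_right_comm n 1 s)]
    rw [h1]
    show _ = (∑ s ∈ Finset.range (m + 1), towerTransition a n s (y (n + s))) - y n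
    rw [Finset.sum_range_succ']
    have h0 : towerTransition a n 0 (y (n + 0)) = y n := rfl
    rw [h0]
    abel
  -- the correction terms
  set c : ∀ n, A n := fun n => S n (t (n + 1) + 1) - S n (t n) with hcdef
  have hc : ∀ n, c n ∈ B n := by
    intro n
    have hle : t n ≤ t (n + 1) + 1 := le_trans (htmono n) (Nat.le_succ _)
    have : c n = ∑ s ∈ Finset.Ico (t n) (t (n + 1) + 1),
        towerTransition a n s (y (n + s)) := by
      rw [hcdef, hS, Finset.sum_Ico_eq_sub _ hle]
    rw [this]
    exact Submodule.sum_mem _ fun s hs =>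
      hterm n s (le_trans (htk n) (Finset.mem_Ico.mp hs).1)
  -- recursive correction sequence
  choose g hg1 hg2 using Bsurj
  set u : ∀ n, {v : A n // v ∈ B n} := fun n =>
    Nat.rec ⟨0, Submodule.zero_mem _⟩
      (fun n un => ⟨g n (un.1 - c n) (sub_mem un.2 (hc n)),
        hg1 n (un.1 - c n) (sub_mem un.2 (hc n))⟩) n with hu
  have hurec : ∀ n, a n (u (n + 1)).1 = (u n).1 - c n := by
    intro n
    exact hg2 n ((u n).1 - c n) (sub_mem (u n).2 (hc n))
  refine ⟨fun n => S n (t n) + (u n).1, ?_⟩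
  funext n
  simp only [LinearMap.pi_apply, LinearMap.sub_apply, LinearMap.coe_comp,
    Function.comp_apply, LinearMap.proj_apply]
  rw [map_add, hSrec, hurec]
  show S n (t n) + (u n).1 -
      (S n (t (n + 1) + 1) - y n + ((u n).1 - (S n (t (n + 1) + 1) - S n (t n)))) = y n
  abel
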